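/- For all m, n ≥ 0, if (F_i)_{i=1}^k is a sequence of sets with F_1 < F_2 < … < F_k, each F_i ∈ S_n, and {min F_i : 1 ≤ i ≤ k} ∈ S_m, then ⋃_{i=1}^k F_i ∈ S_{m+n}. -/

import Mathlib

def Schreier : ℕ → Set (Finset ℕ)
  | 0 => {F | F.card ≤ 1}
  | n + 1 => {F | ∃ (k : ℕ) (G : ℕ → Finset ℕ),
      F = (Finset.range k).biUnion G ∧
      (∀ i < k, G i ∈ Schreier n) ∧
      (∀ i < k, (G i).Nonempty) ∧
      (∀ i j, i < j → j < k → ∀ a ∈ G i, ∀ b ∈ G j, a < b) ∧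
      (∀ a ∈ G 0, k ≤ a)}

def minN (E : Finset ℕ) : ℕ := E.min.untopD 0

lemma minN_eq {E : Finset ℕ} (h : E.Nonempty) : minN E = E.min' h := by
  rw [minN, ← Finset.coe_min' h]; exact WithTop.untopD_coe _ _

lemma minN_mem {E : Finset ℕ} (h : E.Nonempty) : minN E ∈ E := by
  rw [minN_eq h]; exact E.min'_mem h

lemma minN_le {E : Finset ℕ} {a : ℕ} (ha : a ∈ E) : minN E ≤ a := by
  rw [minN_eq ⟨a, ha⟩]; exact Finset.min'_le E a ha

lemma empty_mem_Schreier (n : ℕ) : ∅ ∈ Schreier n := by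
  cases n with
  | zero => simp [Schreier]
  | succ n => exact ⟨0, fun _ => ∅, by simp, by simp, by simp, by omega, by simp⟩

lemma aux (m : ℕ) : ∀ (n : ℕ) (s : Finset ℕ) (F : ℕ → Finset ℕ),
    (∀ i ∈ s, (F i).Nonempty) →
    (∀ i ∈ s, F i ∈ Schreier n) →
    (∀ i ∈ s, ∀ j ∈ s, i < j → ∀ a ∈ F i, ∀ b ∈ F j, a < b) →
    s.image (fun i => minN (F i)) ∈ Schreier m →
    s.biUnion F ∈ Schreier (m + n) := by
  induction m with
  | zero =>
    intro n s F hne hmem hord hadm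
    have hcard : s.card ≤ 1 := by
      have hinj : Set.InjOn (fun i => minN (F i)) s := by
        intro i hi j hj hij
        by_contra hne'
        rcases lt_or_gt_of_ne hne' with h | h
        · exact absurd hij (ne_of_lt (hord i hi j hj h _ (minN_mem (hne i hi)) _
            (minN_mem (hne j hj))))
        · exact absurd hij.symm (ne_of_lt (hord j hj i hi h _ (minN_mem (hne j hj)) _
            (minN_mem (hne i hi))))
      have := Finset.card_image_of_injOn hinj
      have h1 : (s.image (fun i => minN (F i))).card ≤ 1 := hadm
      omega
    rw [Nat.zero_add]
    rcases s.eq_empty_or_nonempty with rfl | ⟨i, hi⟩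
    · simpa using empty_mem_Schreier n
    · have hs : s = {i} := by
        apply Finset.eq_singleton_iff_unique_mem.mpr
        exact ⟨hi, fun j hj => Finset.card_le_one.mp hcard j hj i hi⟩
      rw [hs, Finset.singleton_biUnion]
      exact hmem i hi
  | succ m ih =>
    intro n s F hne hmem hord hadm
    obtain ⟨K, G, hEq, hGmem, hGne, hGord, hGmin⟩ := hadm
    set t : ℕ → Finset ℕ := fun j => s.filter (fun i => minN (F i) ∈ G j) with ht
    set H : ℕ → Finset ℕ := fun j => (t j).biUnion F with hH
    have himg : ∀ j < K, (t j).image (fun i => minN (F i)) = G j := by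
      intro j hj
      apply Finset.Subset.antisymm
      · intro a ha
        obtain ⟨i, hi, rfl⟩ := Finset.mem_image.mp ha
        exact (Finset.mem_filter.mp hi).2
      · intro a ha
        have : a ∈ s.image (fun i => minN (F i)) := by
          rw [hEq]
          exact Finset.mem_biUnion.mpr ⟨j, Finset.mem_range.mpr hj, ha⟩
        obtain ⟨i, hi, rfl⟩ := Finset.mem_image.mp this
        exact Finset.mem_image.mpr ⟨i, Finset.mem_filter.mpr ⟨hi, ha⟩, rfl⟩
    have hunion : s.biUnion F = (Finset.range K).biUnion H := by
      ext a
      simp only [Finset.mem_biUnion, Finset.mem_range, hH, ht, Finset.mem_filter]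
      constructor
      · rintro ⟨i, hi, ha⟩
        have : minN (F i) ∈ s.image (fun i => minN (F i)) :=
          Finset.mem_image.mpr ⟨i, hi, rfl⟩
        rw [hEq] at this
        obtain ⟨j, hj, hji⟩ := Finset.mem_biUnion.mp this
        exact ⟨j, Finset.mem_range.mp hj, i, ⟨hi, hji⟩, ha⟩
      · rintro ⟨j, hj, i, ⟨hi, _⟩, ha⟩
        exact ⟨i, hi, ha⟩
    have key : ∀ j i i', i ∈ t j → i' ∈ t j → True := fun _ _ _ _ _ => trivial
    rw [Nat.succ_add]
    refine ⟨K, H, hunion, ?_, ?_, ?_, ?_⟩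
    · intro j hj
      apply ih n (t j) F
      · intro i hi; exact hne i (Finset.mem_filter.mp hi).1
      · intro i hi; exact hmem i (Finset.mem_filter.mp hi).1
      · intro i hi i' hi' h
        exact hord i (Finset.mem_filter.mp hi).1 i' (Finset.mem_filter.mp hi').1 h
      · rw [himg j hj]; exact hGmem j hj
    · intro j hj
      obtain ⟨a, ha⟩ := hGne j hj
      rw [← himg j hj] at ha
      obtain ⟨i, hi, rfl⟩ := Finset.mem_image.mp ha
      obtain ⟨b, hb⟩ := hne i (Finset.mem_filter.mp hi).1
      exact ⟨b, Finset.mem_biUnion.mpr ⟨i, hi, hb⟩⟩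
    · intro j j' hjj' hj' a ha b hb
      obtain ⟨i, hi, hai⟩ := Finset.mem_biUnion.mp ha
      obtain ⟨i', hi', hbi'⟩ := Finset.mem_biUnion.mp hb
      have hi1 := Finset.mem_filter.mp hi
      have hi'1 := Finset.mem_filter.mp hi'
      have hmin : minN (F i) < minN (F i') :=
        hGord j j' hjj' hj' _ hi1.2 _ hi'1.2
      have hlt : i < i' := by
        rcases lt_trichotomy i i' with h | rfl | h
        · exact h
        · exact absurd hmin (lt_irrefl _)
        · exact absurd (hord i' hi'1.1 i hi1.1 h _ (minN_mem (hne i' hi'1.1)) _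
            (minN_mem (hne i hi1.1))) (by omega)
      exact hord i hi1.1 i' hi'1.1 hlt a hai b hbi'
    · intro a ha
      obtain ⟨i, hi, hai⟩ := Finset.mem_biUnion.mp ha
      have hi1 := Finset.mem_filter.mp hi
      exact le_trans (hGmin _ hi1.2) (minN_le hai)

theorem stmt11 (m n k : ℕ) (F : Fin k → Finset ℕ)
    (hne : ∀ i, (F i).Nonempty)
    (hmem : ∀ i, F i ∈ Schreier n)
    (hord : ∀ i j : Fin k, i < j → ∀ a ∈ F i, ∀ b ∈ F j, a < b)
    (hadm : Finset.univ.image (fun i => minN (F i)) ∈ Schreier m) :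
    Finset.univ.biUnion F ∈ Schreier (m + n) := by
  set F' : ℕ → Finset ℕ := fun i => if h : i < k then F ⟨i, h⟩ else ∅ with hF'
  have hF'eq : ∀ (i : ℕ) (h : i < k), F' i = F ⟨i, h⟩ := fun i h => dif_pos h
  have himg : (Finset.range k).image (fun i => minN (F' i)) =
      Finset.univ.image (fun i : Fin k => minN (F i)) := by
    ext a
    simp only [Finset.mem_image, Finset.mem_range, Finset.mem_univ, true_and]
    constructor
    · rintro ⟨i, hi, rfl⟩
      exact ⟨⟨i, hi⟩, by rw [hF'eq i hi]⟩
    · rintro ⟨i, rfl⟩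
      exact ⟨i.val, i.isLt, by rw [hF'eq i.val i.isLt]⟩
  have hbu : (Finset.range k).biUnion F' = Finset.univ.biUnion F := by
    ext a
    simp only [Finset.mem_biUnion, Finset.mem_range, Finset.mem_univ, true_and]
    constructor
    · rintro ⟨i, hi, ha⟩
      exact ⟨⟨i, hi⟩, by rwa [hF'eq i hi] at ha⟩
    · rintro ⟨i, ha⟩
      exact ⟨i.val, i.isLt, by rw [hF'eq i.val i.isLt]; exact ha⟩
  rw [← hbu]
  apply aux m n (Finset.range k) F'
  · intro i hi
    have hi' := Finset.mem_range.mp hi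
    rw [hF'eq i hi']
    exact hne _
  · intro i hi
    have hi' := Finset.mem_range.mp hi
    rw [hF'eq i hi']
    exact hmem _
  · intro i hi j hj hij a ha b hb
    have hi' := Finset.mem_range.mp hi
    have hj' := Finset.mem_range.mp hj
    rw [hF'eq i hi'] at ha
    rw [hF'eq j hj'] at hb
    exact hord ⟨i, hi'⟩ ⟨j, hj'⟩ hij a ha b hb
  · rw [himg]; exact hadm
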